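/- Let γ : ℝ × ℝ → ℝ² be continuously differentiable such that: γ(τ, x+1) = γ(τ,x) for all (τ,x); ∂ₓγ(τ,x) ≠ 0 for all (τ,x); for each τ ∈ [-1,1] the map x ↦ γ(τ,x) is injective on [0,1); and ⟨∂_τγ(τ,x), N_γ(τ,x)⟩ = 0 for all τ ∈ [-1,1] and all x ∈ ℝ. Then for every τ ∈ [-1,1] the image γ(τ, ℝ) equals the image γ(0, ℝ). -/

import Mathlib

open scoped RealInnerProductSpace
open scoped Topology

noncomputable section

/-- Rotation of the plane by a quarter turn: `J(a,b) = (-b,a)`. -/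
def Jrot (v : EuclideanSpace ℝ (Fin 2)) : EuclideanSpace ℝ (Fin 2) :=
  WithLp.toLp 2 (fun i : Fin 2 => if i = 0 then -(v 1) else v 0)

/-- Partial derivative in the first (deformation) variable `τ`. -/
def pdTau (γ : ℝ → ℝ → EuclideanSpace ℝ (Fin 2)) (τ x : ℝ) : EuclideanSpace ℝ (Fin 2) :=
  deriv (fun t => γ t x) τ

/-- Partial derivative in the second (curve) variable `x`. -/
def pdX (γ : ℝ → ℝ → EuclideanSpace ℝ (Fin 2)) (τ x : ℝ) : EuclideanSpace ℝ (Fin 2) :=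
  deriv (fun y => γ τ y) x

/-- Unit tangent vector `T_γ = ∂ₓγ / ‖∂ₓγ‖`. -/
def unitTangent (γ : ℝ → ℝ → EuclideanSpace ℝ (Fin 2)) (τ x : ℝ) : EuclideanSpace ℝ (Fin 2) :=
  ‖pdX γ τ x‖⁻¹ • pdX γ τ x

/-- Unit normal vector `N_γ = J T_γ`. -/
def unitNormal (γ : ℝ → ℝ → EuclideanSpace ℝ (Fin 2)) (τ x : ℝ) : EuclideanSpace ℝ (Fin 2) :=
  Jrot (unitTangent γ τ x)

/-- Infinitesimal deformation function `n_γ(τ,x) = ⟪∂_τ γ(τ,x), N_γ(τ,x)⟫`. -/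
def deformationFn (γ : ℝ → ℝ → EuclideanSpace ℝ (Fin 2)) (τ x : ℝ) : ℝ :=
  ⟪pdTau γ τ x, unitNormal γ τ x⟫

-- algebra lemmas
lemma inner2 (u v : EuclideanSpace ℝ (Fin 2)) : ⟪u, v⟫ = u 0 * v 0 + u 1 * v 1 := by
  simp [PiLp.inner_apply, RCLike.inner_apply, Fin.sum_univ_two, mul_comm]

@[simp] lemma Jrot_apply0 (v : EuclideanSpace ℝ (Fin 2)) : Jrot v 0 = -(v 1) := rfl
@[simp] lemma Jrot_apply1 (v : EuclideanSpace ℝ (Fin 2)) : Jrot v 1 = v 0 := rfl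

lemma Jrot_smul (a : ℝ) (v : EuclideanSpace ℝ (Fin 2)) : Jrot (a • v) = a • Jrot v := by
  ext i
  fin_cases i <;> simp [Jrot]

lemma inner_Jrot_self (v : EuclideanSpace ℝ (Fin 2)) : ⟪v, Jrot v⟫ = 0 := by
  rw [inner2]; simp; ring

lemma decomp2 (T v : EuclideanSpace ℝ (Fin 2)) (hT : ⟪T, T⟫ = 1) :
    v = ⟪v, T⟫ • T + ⟪v, Jrot T⟫ • Jrot T := by
  have hT' : T 0 * T 0 + T 1 * T 1 = 1 := by rw [inner2] at hT; linarith
  ext i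
  fin_cases i <;>
    simp only [Fin.zero_eta, Fin.mk_one, Fin.isValue, PiLp.add_apply, PiLp.smul_apply, smul_eq_mul, inner2, Jrot_apply0, Jrot_apply1]
  · linear_combination (-(v 0)) * hT'
  · linear_combination (-(v 1)) * hT'

lemma decomp2' (T v : EuclideanSpace ℝ (Fin 2)) (hT : ⟪T, T⟫ = 1)
    (h1 : ⟪v, T⟫ = 0) (h2 : ⟪v, Jrot T⟫ = 0) : v = 0 := by
  have := decomp2 T v hT
  rw [h1, h2] at this
  simpa using this

-- partial derivatives via fderiv
section partials
variable (γ : ℝ → ℝ → EuclideanSpace ℝ (Fin 2)) (hγ : ContDiff ℝ 1 (Function.uncurry γ))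
include hγ

lemma hasFDerivAt_uncurry (q : ℝ × ℝ) :
    HasFDerivAt (Function.uncurry γ) (fderiv ℝ (Function.uncurry γ) q) q :=
  ((hγ.differentiable one_ne_zero) q).hasFDerivAt

lemma pdTau_eq (τ x : ℝ) :
    pdTau γ τ x = fderiv ℝ (Function.uncurry γ) (τ, x) (1, 0) := by
  have h1 : HasDerivAt (fun t : ℝ => (t, x)) ((1 : ℝ), (0 : ℝ)) τ :=
    (hasDerivAt_id τ).prodMk (hasDerivAt_const τ x)
  have h2 := (hasFDerivAt_uncurry γ hγ (τ, x)).comp_hasDerivAt τ h1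
  exact h2.deriv

lemma pdX_eq (τ x : ℝ) :
    pdX γ τ x = fderiv ℝ (Function.uncurry γ) (τ, x) (0, 1) := by
  have h1 : HasDerivAt (fun y : ℝ => (τ, y)) ((0 : ℝ), (1 : ℝ)) x :=
    (hasDerivAt_const x τ).prodMk (hasDerivAt_id x)
  have h2 := (hasFDerivAt_uncurry γ hγ (τ, x)).comp_hasDerivAt x h1
  exact h2.deriv

/-- chain rule along a moving point -/
lemma hasDerivAt_comp_curve {X : ℝ → ℝ} {x' σ : ℝ} (hX : HasDerivAt X x' σ) :
    HasDerivAt (fun t => γ t (X t)) (pdTau γ σ (X σ) + x' • pdX γ σ (X σ)) σ := by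
  have h1 : HasDerivAt (fun t : ℝ => (t, X t)) ((1 : ℝ), x') σ :=
    (hasDerivAt_id σ).prodMk hX
  have h2 := (hasFDerivAt_uncurry γ hγ (σ, X σ)).comp_hasDerivAt σ h1
  have h3 : ((1 : ℝ), x') = ((1 : ℝ), (0 : ℝ)) + x' • ((0 : ℝ), (1 : ℝ)) := by
    simp [Prod.ext_iff]
  rw [pdTau_eq γ hγ, pdX_eq γ hγ]
  rwa [h3, map_add, map_smul] at h2

lemma continuous_pdX : Continuous (fun q : ℝ × ℝ => pdX γ q.1 q.2) := by
  have h : (fun q : ℝ × ℝ => pdX γ q.1 q.2)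
      = fun q => fderiv ℝ (Function.uncurry γ) q ((0 : ℝ), (1 : ℝ)) := by
    funext q; exact pdX_eq γ hγ q.1 q.2
  rw [h]
  exact (ContinuousLinearMap.apply ℝ (EuclideanSpace ℝ (Fin 2))
    ((0 : ℝ), (1 : ℝ))).continuous.comp (hγ.continuous_fderiv one_ne_zero)

end partials

-- unit tangent has unit norm
lemma inner_unitTangent_self (γ : ℝ → ℝ → EuclideanSpace ℝ (Fin 2)) {τ x : ℝ}
    (h : pdX γ τ x ≠ 0) : ⟪unitTangent γ τ x, unitTangent γ τ x⟫ = 1 := by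
  have hn : ‖pdX γ τ x‖ ≠ 0 := norm_ne_zero_iff.mpr h
  rw [unitTangent, real_inner_smul_left, real_inner_smul_right,
    real_inner_self_eq_norm_sq]
  field_simp

lemma inner_pdX_unitNormal (γ : ℝ → ℝ → EuclideanSpace ℝ (Fin 2)) (τ x : ℝ) :
    ⟪pdX γ τ x, unitNormal γ τ x⟫ = 0 := by
  rw [unitNormal, unitTangent, Jrot_smul, real_inner_smul_right, inner_Jrot_self, mul_zero]

lemma inner_pdX_unitTangent (γ : ℝ → ℝ → EuclideanSpace ℝ (Fin 2)) {τ x : ℝ}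
    (h : pdX γ τ x ≠ 0) : ⟪unitTangent γ τ x, pdX γ τ x⟫ = ‖pdX γ τ x‖ := by
  have hn : ‖pdX γ τ x‖ ≠ 0 := norm_ne_zero_iff.mpr h
  rw [unitTangent, real_inner_smul_left, real_inner_self_eq_norm_sq, sq]
  field_simp

-- range equals image of the unit interval, by periodicity
lemma range_eq_image (γ : ℝ → ℝ → EuclideanSpace ℝ (Fin 2))
    (hper : ∀ τ x, γ τ (x + 1) = γ τ x) (τ : ℝ) :
    Set.range (γ τ) = γ τ '' Set.Icc 0 1 := by
  apply Set.Subset.antisymm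
  · rintro _ ⟨x, rfl⟩
    have hp : Function.Periodic (γ τ) 1 := fun y => hper τ y
    refine ⟨Int.fract x, ⟨Int.fract_nonneg x, (Int.fract_lt_one x).le⟩, ?_⟩
    have := hp.sub_int_mul_eq (x := x) ⌊x⌋
    rw [mul_one] at this
    rw [Int.fract]
    exact this
  · rintro _ ⟨x, _, rfl⟩
    exact ⟨x, rfl⟩

-- the set of times at which p is on the curve is closed
lemma isClosed_mem_curve (γ : ℝ → ℝ → EuclideanSpace ℝ (Fin 2))
    (hγ : Continuous (Function.uncurry γ))
    (hper : ∀ τ x, γ τ (x + 1) = γ τ x) (p : EuclideanSpace ℝ (Fin 2)) :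
    IsClosed {τ : ℝ | p ∈ Set.range (γ τ)} := by
  apply IsSeqClosed.isClosed
  intro u τ hu hlim
  have hmem : ∀ n, ∃ x ∈ Set.Icc (0:ℝ) 1, γ (u n) x = p := by
    intro n
    have := hu n
    rw [Set.mem_setOf_eq, range_eq_image γ hper] at this
    obtain ⟨x, hx, hxe⟩ := this
    exact ⟨x, hx, hxe⟩
  choose X hX hXe using hmem
  obtain ⟨x, hxI, φ, hφ, hxlim⟩ := isCompact_Icc.tendsto_subseq hX
  have h1 : Filter.Tendsto (fun n => (u (φ n), X (φ n))) Filter.atTop (𝓝 (τ, x)) :=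
    (hlim.comp hφ.tendsto_atTop).prodMk_nhds hxlim
  have h2 : Filter.Tendsto (fun n => γ (u (φ n)) (X (φ n))) Filter.atTop (𝓝 (γ τ x)) :=
    (hγ.continuousAt.tendsto).comp h1
  have h3 : (fun n => γ (u (φ n)) (X (φ n))) = fun _ => p := funext fun n => hXe (φ n)
  rw [h3] at h2
  have := tendsto_nhds_unique h2 tendsto_const_nhds
  exact ⟨x, this⟩

-- the shear linear equivalence
def shearEquiv (c d : ℝ) (hd : d ≠ 0) : (ℝ × ℝ) ≃L[ℝ] (ℝ × ℝ) :=
  LinearEquiv.toContinuousLinearEquiv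
  { toFun := fun q => (q.1, c * q.1 + d * q.2)
    invFun := fun q => (q.1, (q.2 - c * q.1) / d)
    map_add' := by intro a b; simp [Prod.ext_iff]; ring
    map_smul' := by intro m a; simp [Prod.ext_iff]; ring
    left_inv := by intro q; simp [Prod.ext_iff]; field_simp
    right_inv := by intro q; simp [Prod.ext_iff]; field_simp; ring }

lemma shearEquiv_apply (c d : ℝ) (hd : d ≠ 0) (q : ℝ × ℝ) :
    shearEquiv c d hd q = (q.1, c * q.1 + d * q.2) := rfl

-- The key local lemma: a point on the curve at time τ₀ stays on the curve for nearby times.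
lemma local_mem (γ : ℝ → ℝ → EuclideanSpace ℝ (Fin 2))
    (hγ : ContDiff ℝ 1 (Function.uncurry γ))
    (hx : ∀ τ x, pdX γ τ x ≠ 0)
    (hn : ∀ τ ∈ Set.Icc (-1 : ℝ) 1, ∀ x : ℝ, deformationFn γ τ x = 0)
    {τ₀ : ℝ} (hτ₀ : τ₀ ∈ Set.Icc (-1 : ℝ) 1) (x₀ : ℝ) :
    ∀ᶠ τ in 𝓝 τ₀, τ ∈ Set.Icc (-1 : ℝ) 1 → γ τ₀ x₀ ∈ Set.range (γ τ) := by
  classical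
  set p := γ τ₀ x₀ with hpdef
  set T₀ := unitTangent γ τ₀ x₀ with hT₀def
  have hT₀ : ⟪T₀, T₀⟫ = 1 := inner_unitTangent_self γ (hx τ₀ x₀)
  set Φ : ℝ × ℝ → ℝ × ℝ := fun q => (q.1, ⟪T₀, γ q.1 q.2 - p⟫) with hΦdef
  set c : ℝ := ⟪T₀, pdTau γ τ₀ x₀⟫ with hcdef
  set d : ℝ := ‖pdX γ τ₀ x₀‖ with hddef
  have hd : d ≠ 0 := norm_ne_zero_iff.mpr (hx τ₀ x₀)
  set A := shearEquiv c d hd with hAdef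
  set Dγ := fderiv ℝ (Function.uncurry γ) (τ₀, x₀) with hDdef
  have hD : HasFDerivAt (Function.uncurry γ) Dγ (τ₀, x₀) := hasFDerivAt_uncurry γ hγ _
  have hΦB : HasFDerivAt Φ
      ((ContinuousLinearMap.fst ℝ ℝ ℝ).prod ((innerSL ℝ T₀).comp Dγ)) (τ₀, x₀) := by
    refine (hasFDerivAt_fst).prodMk ?_
    exact ((innerSL ℝ T₀).hasFDerivAt).comp (τ₀, x₀) (hD.sub_const p)
  have hAeq : ((ContinuousLinearMap.fst ℝ ℝ ℝ).prod ((innerSL ℝ T₀).comp Dγ))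
      = (A : (ℝ × ℝ) →L[ℝ] (ℝ × ℝ)) := by
    apply ContinuousLinearMap.ext
    intro q
    have e1 : Dγ ((1 : ℝ), (0 : ℝ)) = pdTau γ τ₀ x₀ := (pdTau_eq γ hγ τ₀ x₀).symm
    have e2 : Dγ ((0 : ℝ), (1 : ℝ)) = pdX γ τ₀ x₀ := (pdX_eq γ hγ τ₀ x₀).symm
    have hq : q = q.1 • ((1 : ℝ), (0 : ℝ)) + q.2 • ((0 : ℝ), (1 : ℝ)) := by
      simp [Prod.ext_iff]
    have hDq : Dγ q = q.1 • pdTau γ τ₀ x₀ + q.2 • pdX γ τ₀ x₀ := by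
      conv_lhs => rw [hq]
      rw [map_add, map_smul, map_smul, e1, e2]
    have hip : ⟪T₀, Dγ q⟫ = c * q.1 + d * q.2 := by
      rw [hDq, inner_add_right, real_inner_smul_right, real_inner_smul_right,
        ← hcdef, inner_pdX_unitTangent γ (hx τ₀ x₀), ← hddef]
      ring
    show ((q.1 : ℝ), (innerSL ℝ T₀) (Dγ q)) = (A : (ℝ × ℝ) →L[ℝ] (ℝ × ℝ)) q
    have : ((A : (ℝ × ℝ) →L[ℝ] (ℝ × ℝ)) q) = (q.1, c * q.1 + d * q.2) := rfl
    rw [this, innerSL_apply_apply, hip]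
  have hΦ' : HasFDerivAt Φ (A : (ℝ × ℝ) →L[ℝ] (ℝ × ℝ)) (τ₀, x₀) := hAeq ▸ hΦB
  have hΦcd : ContDiffAt ℝ 1 Φ (τ₀, x₀) := by
    apply ContDiff.contDiffAt
    exact contDiff_fst.prodMk ((innerSL ℝ T₀).contDiff.comp (hγ.sub contDiff_const))
  have key := hΦcd.hasStrictFDerivAt' hΦ' one_ne_zero
  set Ψ := key.localInverse Φ A (τ₀, x₀) with hΨdef
  have hΨright : ∀ᶠ y in 𝓝 (Φ (τ₀, x₀)), Φ (Ψ y) = y := key.eventually_right_inverse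
  have hΨa : Ψ (Φ (τ₀, x₀)) = (τ₀, x₀) := key.localInverse_apply_image
  have hΨcd : ContDiffAt ℝ 1 Ψ (Φ (τ₀, x₀)) := hΦcd.to_localInverse hΦ' one_ne_zero
  have hΦa : Φ (τ₀, x₀) = (τ₀, 0) := by
    simp [hΦdef, ← hpdef]
  obtain ⟨u, hu, hΨu⟩ := hΨcd.contDiffOn le_rfl (by simp)
  rw [hΦa] at hu hΨright hΨa
  obtain ⟨V, hVu, hVopen, hVmem⟩ := mem_nhds_iff.mp hu
  have hΨdiff : ∀ y ∈ V, DifferentiableAt ℝ Ψ y := fun y hy =>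
    ((hΨu.mono hVu).differentiableOn one_ne_zero).differentiableAt (hVopen.mem_nhds hy)
  set X : ℝ → ℝ := fun t => (Ψ (t, 0)).2 with hXdef
  have hemb : Continuous (fun t : ℝ => (t, (0 : ℝ))) := continuous_id.prodMk continuous_const
  have E1 : ∀ᶠ t in 𝓝 τ₀, (t, (0 : ℝ)) ∈ V := by
    have hVn : V ∈ 𝓝 ((τ₀ : ℝ), (0 : ℝ)) := hVopen.mem_nhds hVmem
    exact hemb.continuousAt.preimage_mem_nhds hVn
  have E2 : ∀ᶠ t in 𝓝 τ₀, Φ (Ψ (t, 0)) = (t, 0) := by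
    have htend : Filter.Tendsto (fun t : ℝ => (t, (0 : ℝ))) (𝓝 τ₀) (𝓝 (τ₀, 0)) :=
      hemb.tendsto τ₀
    exact htend.eventually hΨright
  have hΨτ₀ : Ψ (τ₀, 0) = (τ₀, x₀) := hΨa
  have hXτ₀ : X τ₀ = x₀ := by rw [hXdef]; simp [hΨτ₀]
  have hΨcont : ContinuousAt Ψ (τ₀, 0) := by
    have := key.localInverse_continuousAt
    rwa [hΦa] at this
  have hXcont : ContinuousAt X τ₀ := by
    have h1 : ContinuousAt (Ψ ∘ fun t : ℝ => (t, (0 : ℝ))) τ₀ :=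
      ContinuousAt.comp hΨcont hemb.continuousAt
    exact (ContinuousAt.comp continuous_snd.continuousAt h1 :
      ContinuousAt (Prod.snd ∘ Ψ ∘ fun t : ℝ => (t, (0 : ℝ))) τ₀)
  set θ : ℝ → ℝ := fun t => ⟪T₀, unitTangent γ t (X t)⟫ with hθdef
  have hθτ₀ : θ τ₀ = 1 := by rw [hθdef]; simp only [hXτ₀, ← hT₀def]; exact hT₀
  have hθcont : ContinuousAt θ τ₀ := by
    have hpair : ContinuousAt (fun t : ℝ => ((t : ℝ), X t)) τ₀ :=
      continuousAt_id.prodMk hXcont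
    have hpdXc : ContinuousAt (fun t : ℝ => pdX γ t (X t)) τ₀ :=
      ((continuous_pdX γ hγ).continuousAt).comp hpair
    have hne : ‖pdX γ τ₀ (X τ₀)‖ ≠ 0 := norm_ne_zero_iff.mpr (hx τ₀ (X τ₀))
    have hsm : ContinuousAt (fun t : ℝ => unitTangent γ t (X t)) τ₀ :=
      ((hpdXc.norm.inv₀ hne).smul hpdXc : ContinuousAt
        (fun t : ℝ => ‖pdX γ t (X t)‖⁻¹ • pdX γ t (X t)) τ₀)
    exact continuousAt_const.inner hsm
  have E3 : ∀ᶠ t in 𝓝 τ₀, θ t ≠ 0 := hθcont.eventually_ne (by rw [hθτ₀]; norm_num)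
  have Eall := E1.and (E2.and E3)
  rw [Metric.eventually_nhds_iff] at Eall
  obtain ⟨ε, hε, hE⟩ := Eall
  rw [Metric.eventually_nhds_iff]
  refine ⟨ε, hε, ?_⟩
  intro τ hτd hτI
  -- facts valid on the ball
  have F1 : ∀ σ : ℝ, dist σ τ₀ < ε → ⟪T₀, γ σ (X σ) - p⟫ = 0 := by
    intro σ hσ
    have h2 := (hE hσ).2.1
    have hfst : (Ψ (σ, 0)).1 = σ := congrArg Prod.fst h2
    have hsnd : ⟪T₀, γ (Ψ (σ, 0)).1 (Ψ (σ, 0)).2 - p⟫ = 0 := congrArg Prod.snd h2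
    rwa [hfst] at hsnd
  have F2 : ∀ σ : ℝ, dist σ τ₀ < ε → HasDerivAt X (deriv X σ) σ := by
    intro σ hσ
    have hdiff : DifferentiableAt ℝ X σ := by
      refine differentiable_snd.differentiableAt.comp σ ?_
      exact (hΨdiff (σ, 0) (hE hσ).1).comp σ (differentiableAt_id.prodMk (differentiableAt_const 0))
    exact hdiff.hasDerivAt
  -- on the ball and inside the parameter interval the curve point is stationary
  set g : ℝ → ℝ := fun t => ⟪Jrot T₀, γ t (X t) - p⟫ with hgdef
  have hgderiv : ∀ σ : ℝ, dist σ τ₀ < ε → σ ∈ Set.Icc (-1 : ℝ) 1 → HasDerivAt g 0 σ := by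
    intro σ hσ hσI
    set w : EuclideanSpace ℝ (Fin 2) :=
      pdTau γ σ (X σ) + (deriv X σ) • pdX γ σ (X σ) with hwdef
    have hw : HasDerivAt (fun t => γ t (X t)) w σ := hasDerivAt_comp_curve γ hγ (F2 σ hσ)
    -- derivative of the tangential component vanishes since it is locally 0
    have hfval : HasDerivAt (fun t => ⟪T₀, γ t (X t) - p⟫) (⟪T₀, w⟫) σ := by
      have h2 := (hasDerivAt_const σ T₀).inner (𝕜 := ℝ) (hw.sub_const p)
      simpa only [inner_zero_left, inner_zero_right, add_zero, zero_add] using h2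
    have hev0 : (fun t => ⟪T₀, γ t (X t) - p⟫) =ᶠ[𝓝 σ] fun _ => (0 : ℝ) := by
      have hball : Metric.ball τ₀ ε ∈ 𝓝 σ := Metric.isOpen_ball.mem_nhds hσ
      filter_upwards [hball] with t ht
      exact F1 t ht
    have hder0 : ⟪T₀, w⟫ = 0 := by
      have h := hfval.congr_of_eventuallyEq hev0.symm
      exact (h.unique (hasDerivAt_const σ 0))
    -- w is tangential
    set Tσ := unitTangent γ σ (X σ) with hTσdef
    have hTσ : ⟪Tσ, Tσ⟫ = 1 := inner_unitTangent_self γ (hx σ (X σ))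
    have hwN : ⟪w, Jrot Tσ⟫ = 0 := by
      rw [hwdef, inner_add_left, real_inner_smul_left]
      have h1 : ⟪pdTau γ σ (X σ), Jrot Tσ⟫ = 0 := hn σ hσI (X σ)
      have h2 : ⟪pdX γ σ (X σ), Jrot Tσ⟫ = 0 := inner_pdX_unitNormal γ σ (X σ)
      rw [h1, h2]
      ring
    have hdecomp := decomp2 Tσ w hTσ
    rw [hwN, zero_smul, add_zero] at hdecomp
    have hθσ : θ σ ≠ 0 := (hE hσ).2.2
    have hwT : ⟪w, Tσ⟫ = 0 := by
      rw [hdecomp, real_inner_smul_right] at hder0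
      have : ⟪T₀, Tσ⟫ ≠ 0 := hθσ
      exact by
        rcases mul_eq_zero.mp hder0 with h | h
        · exact h
        · exact absurd h this
    have hw0 : w = 0 := by rw [hdecomp, hwT, zero_smul]
    have h2 := (hasDerivAt_const σ (Jrot T₀)).inner (𝕜 := ℝ) (hw.sub_const p)
    rw [hw0] at h2
    simpa only [inner_zero_left, inner_zero_right, add_zero, zero_add] using h2
  -- g is constant on the segment from τ₀ to τ, hence g τ = 0
  have hgτ₀ : g τ₀ = 0 := by rw [hgdef]; simp [hXτ₀, ← hpdef]
  have hseg : ∀ σ : ℝ, σ ∈ Set.uIcc τ₀ τ → dist σ τ₀ < ε ∧ σ ∈ Set.Icc (-1 : ℝ) 1 := by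
    intro σ hσ
    rw [Set.mem_uIcc] at hσ
    rw [Real.dist_eq] at hτd ⊢
    obtain ⟨h1, h2⟩ := hτ₀
    obtain ⟨h3, h4⟩ := hτI
    rcases hσ with ⟨ha, hb⟩ | ⟨ha, hb⟩ <;>
      constructor <;> first
        | (rw [abs_lt] at hτd ⊢; constructor <;> linarith)
        | (constructor <;> linarith)
  have hgτ : g τ = g τ₀ := by
    rcases le_total τ₀ τ with h | h
    · have := constant_of_has_deriv_right_zero (f := g) (a := τ₀) (b := τ)
        (fun σ hσ => ((hgderiv σ (hseg σ (by rwa [Set.uIcc_of_le h])).1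
          (hseg σ (by rwa [Set.uIcc_of_le h])).2).continuousAt).continuousWithinAt)
        (fun σ hσ => ((hgderiv σ (hseg σ (by rw [Set.uIcc_of_le h]; exact Set.mem_Icc_of_Ico hσ)).1
          (hseg σ (by rw [Set.uIcc_of_le h]; exact Set.mem_Icc_of_Ico hσ)).2)).hasDerivWithinAt)
      exact this τ (Set.mem_Icc.mpr ⟨h, le_rfl⟩)
    · have := constant_of_has_deriv_right_zero (f := g) (a := τ) (b := τ₀)
        (fun σ hσ => ((hgderiv σ (hseg σ (by rwa [Set.uIcc_of_ge h])).1
          (hseg σ (by rwa [Set.uIcc_of_ge h])).2).continuousAt).continuousWithinAt)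
        (fun σ hσ => ((hgderiv σ (hseg σ (by rw [Set.uIcc_of_ge h]; exact Set.mem_Icc_of_Ico hσ)).1
          (hseg σ (by rw [Set.uIcc_of_ge h]; exact Set.mem_Icc_of_Ico hσ)).2)).hasDerivWithinAt)
      have h2 := this τ₀ (Set.mem_Icc.mpr ⟨h, le_rfl⟩)
      exact h2.symm
  have hv1 : ⟪T₀, γ τ (X τ) - p⟫ = 0 := F1 τ hτd
  have hv2 : ⟪Jrot T₀, γ τ (X τ) - p⟫ = 0 := by
    have : g τ = 0 := by rw [hgτ]; exact hgτ₀
    exact this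
  have hv : γ τ (X τ) - p = 0 := by
    refine decomp2' T₀ (γ τ (X τ) - p) hT₀ ?_ ?_
    · rw [real_inner_comm]; exact hv1
    · rw [real_inner_comm]; exact hv2
  exact ⟨X τ, by rw [sub_eq_zero] at hv; exact hv⟩

/-- A `C¹` family of simple closed curves whose infinitesimal deformation function vanishes
identically is a constant family: for every `τ ∈ [-1,1]`, the image of `γ(τ,·)` coincides with
the image of `γ(0,·)`. -/
theorem constant_family_of_deformationFn_eq_zero
    (γ : ℝ → ℝ → EuclideanSpace ℝ (Fin 2))
    (hγ : ContDiff ℝ 1 (Function.uncurry γ))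
    (hper : ∀ τ x, γ τ (x + 1) = γ τ x)
    (hx : ∀ τ x, pdX γ τ x ≠ 0)
    (hinj : ∀ τ ∈ Set.Icc (-1 : ℝ) 1, Set.InjOn (γ τ) (Set.Ico 0 1))
    (hn : ∀ τ ∈ Set.Icc (-1 : ℝ) 1, ∀ x : ℝ, deformationFn γ τ x = 0) :
    ∀ τ ∈ Set.Icc (-1 : ℝ) 1, Set.range (γ τ) = Set.range (γ 0) := by
  have hγc : Continuous (Function.uncurry γ) := hγ.continuous
  have hIcc : IsPreconnected (Set.Icc (-1 : ℝ) 1) := isPreconnected_Icc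
  have H : ∀ p : EuclideanSpace ℝ (Fin 2), ∀ τ₁ ∈ Set.Icc (-1 : ℝ) 1,
      ∀ τ₂ ∈ Set.Icc (-1 : ℝ) 1, p ∈ Set.range (γ τ₁) → p ∈ Set.range (γ τ₂) := by
    intro p τ₁ hτ₁ τ₂ hτ₂ hp
    set C := {τ : ℝ | p ∈ Set.range (γ τ)} with hCdef
    have hC : IsClosed C := isClosed_mem_curve γ hγc hper p
    by_contra hτ₂C
    have hopen : ∀ σ : ℝ, ∃ O : Set ℝ, IsOpen O ∧
        (σ ∈ Set.Icc (-1 : ℝ) 1 ∩ C →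
          σ ∈ O ∧ ∀ τ ∈ O, τ ∈ Set.Icc (-1 : ℝ) 1 → p ∈ Set.range (γ τ)) := by
      intro σ
      by_cases hσ : σ ∈ Set.Icc (-1 : ℝ) 1 ∩ C
      · obtain ⟨x₀, hx₀⟩ := hσ.2
        have hev := local_mem γ hγ hx hn hσ.1 x₀
        rw [hx₀] at hev
        obtain ⟨O, hOsub, hOopen, hOmem⟩ := mem_nhds_iff.mp hev
        exact ⟨O, hOopen, fun _ => ⟨hOmem, fun τ hτO hτI => hOsub hτO hτI⟩⟩
      · exact ⟨∅, isOpen_empty, fun h => absurd h hσ⟩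
    choose O hOopen hOspec using hopen
    set U := ⋃ σ ∈ Set.Icc (-1 : ℝ) 1 ∩ C, O σ with hUdef
    have hUopen : IsOpen U := isOpen_biUnion fun σ _ => hOopen σ
    have h1 : Set.Icc (-1 : ℝ) 1 ⊆ U ∪ Cᶜ := by
      intro τ hτ
      by_cases hτC : τ ∈ C
      · exact Or.inl (Set.mem_biUnion ⟨hτ, hτC⟩ (hOspec τ ⟨hτ, hτC⟩).1)
      · exact Or.inr hτC
    have h2 : (Set.Icc (-1 : ℝ) 1 ∩ U).Nonempty :=
      ⟨τ₁, hτ₁, Set.mem_biUnion ⟨hτ₁, hp⟩ (hOspec τ₁ ⟨hτ₁, hp⟩).1⟩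
    have h3 : (Set.Icc (-1 : ℝ) 1 ∩ Cᶜ).Nonempty := ⟨τ₂, hτ₂, hτ₂C⟩
    obtain ⟨σ, hσI, hσU, hσCc⟩ := hIcc U Cᶜ hUopen hC.isOpen_compl h1 h2 h3
    obtain ⟨σ', hσ'mem, hσO⟩ := Set.mem_iUnion₂.mp hσU
    exact hσCc ((hOspec σ' hσ'mem).2 σ hσO hσI)
  intro τ hτ
  have h0 : (0 : ℝ) ∈ Set.Icc (-1 : ℝ) 1 := by constructor <;> norm_num
  ext q
  constructor
  · exact H q τ hτ 0 h0
  · exact H q 0 h0 τ hτ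

end
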